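/- Let n and d be positive integers and let G be an (n,d)-Ramanujan graph. Then any two disjoint sets of vertices A and B with |A| ≥ 4n·d^{-1/8} and |B| ≥ 4n·d^{-1/8} are connected by an edge of G, i.e., there exist a ∈ A and b ∈ B that are adjacent in G. -/

import Mathlib

open Finset

/-- A simple graph `G` on a finite vertex set of cardinality `n` is `(n,d)`-Ramanujan
if it is `d`-regular and every real vector `x` on the vertices whose coordinates sum
to `0` satisfies `‖Ax‖₂ ≤ 2√(d−1)·‖x‖₂`, where `A` is the adjacency matrix of `G`. -/
def IsRamanujan {V : Type*} [Fintype V] [DecidableEq V] (n d : ℕ)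
    (G : SimpleGraph V) [DecidableRel G.Adj] : Prop :=
  Fintype.card V = n ∧ G.IsRegularOfDegree d ∧
    ∀ x : V → ℝ, (∑ v, x v) = 0 →
      Real.sqrt (∑ v, ((G.adjMatrix ℝ).mulVec x v) ^ 2) ≤
        2 * Real.sqrt ((d : ℝ) - 1) * Real.sqrt (∑ v, (x v) ^ 2)

/-- in an `(n,d)`-Ramanujan graph, any two disjoint vertex sets of size
at least `4n·d^{-1/8}` each are connected by an edge. -/
theorem ramanujan_expanding {V : Type*} [Fintype V] [DecidableEq V]
    (n d : ℕ) (hn : 0 < n) (hd : 0 < d)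
    (G : SimpleGraph V) [DecidableRel G.Adj] (hG : IsRamanujan n d G)
    (A B : Finset V) (hdisj : Disjoint A B)
    (hA : 4 * (n : ℝ) * (d : ℝ) ^ (-(1 / 8 : ℝ)) ≤ A.card)
    (hB : 4 * (n : ℝ) * (d : ℝ) ^ (-(1 / 8 : ℝ)) ≤ B.card) :
    ∃ a ∈ A, ∃ b ∈ B, G.Adj a b := by
  by_contra hcon
  push_neg at hcon
  obtain ⟨hcard, hreg, hbound⟩ := hG
  have hn' : (0:ℝ) < n := by positivity
  have hd0 : (0:ℝ) < d := by positivity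
  have hd1 : (1:ℝ) ≤ d := by exact_mod_cast hd
  set c : ℝ := 4 * (n:ℝ) * (d:ℝ) ^ (-(1/8:ℝ)) with hc
  have hcpos : 0 < c := by positivity
  have ha : (0:ℝ) < A.card := lt_of_lt_of_le hcpos hA
  have hb : (0:ℝ) < B.card := lt_of_lt_of_le hcpos hB
  set f : V → ℝ := fun v => (if v ∈ A then (1:ℝ) else 0) - (A.card : ℝ) / n with hfdef
  have hindA : ∑ v, (if v ∈ A then (1:ℝ) else 0) = A.card := by
    rw [Finset.sum_ite_mem, Finset.univ_inter, Finset.sum_const]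
    simp
  have hsum : ∑ v, f v = 0 := by
    simp only [hfdef, Finset.sum_sub_distrib]
    rw [hindA, Finset.sum_const, Finset.card_univ, hcard, nsmul_eq_mul]
    field_simp
    ring
  set y := (G.adjMatrix ℝ).mulVec f with hy
  have hyB : ∀ v ∈ B, y v = -((d : ℝ) * A.card / n) := by
    intro v hv
    rw [hy, SimpleGraph.adjMatrix_mulVec_apply]
    have h1 : ∑ u ∈ G.neighborFinset v, (if u ∈ A then (1:ℝ) else 0) = 0 := by
      apply Finset.sum_eq_zero
      intro u hu
      rw [SimpleGraph.mem_neighborFinset] at hu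
      have : u ∉ A := fun huA => hcon u huA v hv hu.symm
      simp [this]
    simp only [hfdef, Finset.sum_sub_distrib, h1, Finset.sum_const, nsmul_eq_mul]
    rw [G.card_neighborFinset_eq_degree, hreg v]
    ring
  have hsumB : ∑ v ∈ B, y v = -((B.card : ℝ) * ((d : ℝ) * A.card / n)) := by
    rw [Finset.sum_congr rfl hyB, Finset.sum_const, nsmul_eq_mul]
    ring
  -- bound on sum of f^2
  have hfsq : ∑ v, f v ^ 2 ≤ (A.card : ℝ) := by
    have expand : ∀ v : V, f v ^ 2 = ((if v ∈ A then (1:ℝ) else 0)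
        - (2 * ((A.card : ℝ) / n)) * (if v ∈ A then (1:ℝ) else 0)) + ((A.card : ℝ) / n) ^ 2 := by
      intro v; simp only [hfdef]; split <;> ring
    have heq : ∑ v, f v ^ 2 = (A.card : ℝ) - (A.card : ℝ) ^ 2 / n := by
      rw [Finset.sum_congr rfl (fun v _ => expand v), Finset.sum_add_distrib,
        Finset.sum_sub_distrib, ← Finset.mul_sum, hindA, Finset.sum_const,
        Finset.card_univ, hcard, nsmul_eq_mul]
      field_simp
      ring
    rw [heq]
    have h0 : (0:ℝ) ≤ (A.card : ℝ) ^ 2 / n := by positivity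
    linarith
  -- Ramanujan bound gives sum y^2 ≤ 4 d * A.card
  have hysq : ∑ v, y v ^ 2 ≤ 4 * (d : ℝ) * A.card := by
    have hb1 := hbound f hsum
    have hyn : (0:ℝ) ≤ ∑ v, y v ^ 2 := by positivity
    have hfn : (0:ℝ) ≤ ∑ v, f v ^ 2 := by positivity
    have h3 : Real.sqrt (∑ v, y v ^ 2) ≤ 2 * Real.sqrt ((d : ℝ) - 1) * Real.sqrt (∑ v, f v ^ 2) := hb1
    have h4 : ∑ v, y v ^ 2
        ≤ (2 * Real.sqrt ((d : ℝ) - 1) * Real.sqrt (∑ v, f v ^ 2)) ^ 2 := by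
      rw [← Real.sq_sqrt hyn]
      exact pow_le_pow_left₀ (Real.sqrt_nonneg _) h3 2
    have h5 : (2 * Real.sqrt ((d : ℝ) - 1) * Real.sqrt (∑ v, f v ^ 2)) ^ 2
        = 4 * ((d : ℝ) - 1) * (∑ v, f v ^ 2) := by
      rw [mul_pow, mul_pow, Real.sq_sqrt (by linarith : (0:ℝ) ≤ (d:ℝ) - 1),
        Real.sq_sqrt hfn]
      ring
    rw [h5] at h4
    nlinarith [hfn, hfsq, hd0]
  -- Cauchy–Schwarz over B
  have hCS : ((B.card : ℝ) * ((d : ℝ) * A.card / n)) ^ 2 ≤ (B.card : ℝ) * ∑ v, y v ^ 2 := by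
    have := sq_sum_le_card_mul_sum_sq (s := B) (f := y)
    rw [hsumB] at this
    have hsub : ∑ v ∈ B, y v ^ 2 ≤ ∑ v, y v ^ 2 :=
      Finset.sum_le_univ_sum_of_nonneg (fun v => sq_nonneg _)
    calc ((B.card : ℝ) * ((d : ℝ) * A.card / n)) ^ 2
        = (-((B.card : ℝ) * ((d : ℝ) * A.card / n))) ^ 2 := by ring
      _ ≤ (B.card : ℝ) * ∑ v ∈ B, y v ^ 2 := by exact_mod_cast this
      _ ≤ (B.card : ℝ) * ∑ v, y v ^ 2 := by
          apply mul_le_mul_of_nonneg_left hsub (by positivity)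
  -- combine: d * a * b ≤ 4 n^2
  have hkey : (d : ℝ) * A.card * B.card ≤ 4 * (n:ℝ) ^ 2 := by
    have h6 : ((B.card : ℝ) * ((d : ℝ) * A.card / n)) ^ 2
        ≤ (B.card : ℝ) * (4 * (d : ℝ) * A.card) :=
      hCS.trans (mul_le_mul_of_nonneg_left hysq (by positivity))
    have h7 : (B.card : ℝ) ^ 2 * (d : ℝ) ^ 2 * (A.card : ℝ) ^ 2
        ≤ (B.card : ℝ) * (4 * (d : ℝ) * A.card) * n ^ 2 := by
      have hne : (n:ℝ) ≠ 0 := ne_of_gt hn'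
      have := mul_le_mul_of_nonneg_right h6 (by positivity : (0:ℝ) ≤ (n:ℝ)^2)
      calc (B.card : ℝ) ^ 2 * (d : ℝ) ^ 2 * (A.card : ℝ) ^ 2
          = ((B.card : ℝ) * ((d : ℝ) * A.card / n)) ^ 2 * n ^ 2 := by
            field_simp
        _ ≤ (B.card : ℝ) * (4 * (d : ℝ) * A.card) * n ^ 2 := this
    have htpos : (0:ℝ) < (d : ℝ) * A.card * B.card := by positivity
    have h8 : ((d : ℝ) * A.card * B.card) * ((d : ℝ) * A.card * B.card)
        ≤ (4 * (n:ℝ) ^ 2) * ((d : ℝ) * A.card * B.card) := by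
      calc ((d : ℝ) * A.card * B.card) * ((d : ℝ) * A.card * B.card)
          = (B.card : ℝ) ^ 2 * (d : ℝ) ^ 2 * (A.card : ℝ) ^ 2 := by ring
        _ ≤ (B.card : ℝ) * (4 * (d : ℝ) * A.card) * n ^ 2 := h7
        _ = (4 * (n:ℝ) ^ 2) * ((d : ℝ) * A.card * B.card) := by ring
    exact le_of_mul_le_mul_right h8 htpos
  -- derive contradiction
  have hab : c ^ 2 ≤ (A.card : ℝ) * B.card := by
    nlinarith [hcpos, ha, hb]
  have hc2 : c ^ 2 = 16 * (n:ℝ)^2 * (d:ℝ) ^ (-(1/4:ℝ)) := by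
    rw [hc, mul_pow, mul_pow, ← Real.rpow_natCast ((d:ℝ) ^ (-(1/8:ℝ))) 2,
      ← Real.rpow_mul (le_of_lt hd0)]
    norm_num
  have hfinal : (d:ℝ) * (16 * (n:ℝ)^2 * (d:ℝ) ^ (-(1/4:ℝ))) ≤ 4 * (n:ℝ)^2 := by
    calc (d:ℝ) * (16 * (n:ℝ)^2 * (d:ℝ) ^ (-(1/4:ℝ)))
        = (d:ℝ) * c ^ 2 := by rw [hc2]
      _ ≤ (d:ℝ) * ((A.card : ℝ) * B.card) := by
          exact mul_le_mul_of_nonneg_left hab (le_of_lt hd0)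
      _ = (d : ℝ) * A.card * B.card := by ring
      _ ≤ 4 * (n:ℝ)^2 := hkey
  have hd34 : (1:ℝ) ≤ (d:ℝ) * (d:ℝ) ^ (-(1/4:ℝ)) := by
    have : (d:ℝ) * (d:ℝ) ^ (-(1/4:ℝ)) = (d:ℝ) ^ ((3:ℝ)/4) := by
      nth_rewrite 1 [← Real.rpow_one (d:ℝ)]
      rw [← Real.rpow_add hd0]
      norm_num
    rw [this]
    calc (1:ℝ) = (d:ℝ) ^ (0:ℝ) := by rw [Real.rpow_zero]
      _ ≤ (d:ℝ) ^ ((3:ℝ)/4) := Real.rpow_le_rpow_of_exponent_le hd1 (by norm_num)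
  have h9 : 1 * (n:ℝ) ^ 2 ≤ (d:ℝ) * (d:ℝ) ^ (-(1/4:ℝ)) * (n:ℝ) ^ 2 :=
    mul_le_mul_of_nonneg_right hd34 (sq_nonneg (n:ℝ))
  rw [one_mul] at h9
  have h10 : 16 * (n:ℝ) ^ 2 ≤ 4 * (n:ℝ) ^ 2 := by linarith [hfinal, h9]
  have hn2 : (0:ℝ) < (n:ℝ) ^ 2 := by positivity
  linarith
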